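/- Let G be a graph, Γ the set of all cycles of G of length at most ℓ(G) (which generates the cycle space), (T, W) a rooted stable tree-decomposition of G, t a node of T, and P a t-admissible path. Then P has at most ℓ(G) − 1 vertices. -/

import Mathlib

open SimpleGraph

universe u

/-- `x` and `y` are joined by a walk in `G` all of whose vertices lie in `S`. -/
def ConnIn {V : Type u} (G : SimpleGraph V) (S : Set V) (x y : V) : Prop :=
  ∃ p : G.Walk x y, ∀ v ∈ p.support, v ∈ S

/-- `S` is a (nonempty) connected vertex set of `G`, i.e. `G[S]` is connected. -/
def IsConnSet {V : Type u} (G : SimpleGraph V) (S : Set V) : Prop :=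
  S.Nonempty ∧ ∀ x ∈ S, ∀ y ∈ S, ConnIn G S x y

/-- A tree-decomposition of `G` over the tree `T`. -/
structure TreeDecomp {V ι : Type u} (G : SimpleGraph V) (T : SimpleGraph ι) where
  isTree : T.IsTree
  bag : ι → Set V
  exists_bag : ∀ v : V, ∃ t, v ∈ bag t
  exists_bag_adj : ∀ ⦃u v : V⦄, G.Adj u v → ∃ t, u ∈ bag t ∧ v ∈ bag t
  bag_sep : ∀ ⦃t₁ t₃ : ι⦄ (p : T.Walk t₁ t₃), p.IsPath → ∀ t₂ ∈ p.support,
      bag t₁ ∩ bag t₃ ⊆ bag t₂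

/-- The union of the bags `B u` over `u ∈ A`. -/
def unionBags {V ι : Type u} (B : ι → Set V) (A : Set ι) : Set V := ⋃ u ∈ A, B u

/-- `s` is a descendant of `t` in the tree `T` rooted at `r`:
`t` lies on the (unique) `r`–`s` path. -/
def Desc {ι : Type u} (T : SimpleGraph ι) (r t s : ι) : Prop :=
  ∃ p : T.Walk r s, p.IsPath ∧ t ∈ p.support

/-- The set of descendants of `t` (the subtree `T_t`). -/
def descSet {ι : Type u} (T : SimpleGraph ι) (r t : ι) : Set ι := {s | Desc T r t s}

/-- `s` is a child of `t` in the tree `T` rooted at `r`. -/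
def IsChild {ι : Type u} (T : SimpleGraph ι) (r t s : ι) : Prop :=
  T.Adj t s ∧ Desc T r t s

/-- The vertex set of the component of `t₁` in `T` minus the edge `t₁t₂`. -/
def Side {ι : Type u} (T : SimpleGraph ι) (t₁ t₂ : ι) : Set ι :=
  {u | ∃ p : T.Walk u t₁, p.IsPath ∧ t₂ ∉ p.support}

/-- The family of bags `B` is stable: for every tree edge `t₁t₂`, both sides
induce connected subgraphs of `G`. -/
def StableBags {V ι : Type u} (G : SimpleGraph V) (T : SimpleGraph ι) (B : ι → Set V) : Prop :=
  ∀ ⦃t₁ t₂ : ι⦄, T.Adj t₁ t₂ → IsConnSet G (unionBags B (Side T t₁ t₂))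

def TreeDecomp.Stable {V ι : Type u} {G : SimpleGraph V} {T : SimpleGraph ι}
    (td : TreeDecomp G T) : Prop :=
  StableBags G T td.bag

/-- `P` is a `t`-admissible path (w.r.t. the root `r` and bags `B`): a shortest
path lying in `V_{T_t}` joining two distinct components of `G[B t]`. -/
structure IsAdmissible {V ι : Type u} (G : SimpleGraph V) (T : SimpleGraph ι)
    (B : ι → Set V) (r t : ι) {x y : V} (P : G.Walk x y) : Prop where
  isPath : P.IsPath
  support_sub : ∀ v ∈ P.support, v ∈ unionBags B (descSet T r t)
  fst_mem : x ∈ B t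
  snd_mem : y ∈ B t
  not_conn : ¬ ConnIn G (B t) x y
  minimal : ∀ ⦃x' y' : V⦄ (Q : G.Walk x' y'), Q.IsPath →
      (∀ v ∈ Q.support, v ∈ unionBags B (descSet T r t)) →
      x' ∈ B t → y' ∈ B t → ¬ ConnIn G (B t) x' y' → P.length ≤ Q.length

/-- The updated bags obtained by adding the path `P` as in `(*)`:
`W_u = V_u ∪ (V(P) ∩ V_{T_u})` for descendants `u` of `t`, and `W_u = V_u` otherwise. -/
def updatedBag {V ι : Type u} (T : SimpleGraph ι) (B : ι → Set V) (r t : ι)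
    {G : SimpleGraph V} {x y : V} (P : G.Walk x y) (u : ι) : Set V :=
  B u ∪ {v | Desc T r t u ∧ v ∈ P.support ∧ v ∈ unionBags B (descSet T r u)}

/-- The tree-width of `G`: the least `k` such that `G` has a tree-decomposition
all of whose bags have at most `k + 1` vertices. -/
noncomputable def treewidth {V : Type u} (G : SimpleGraph V) : ℕ :=
  sInf {k | ∃ (ι : Type u) (T : SimpleGraph ι) (td : TreeDecomp G T),
    ∀ t, (td.bag t).ncard ≤ k + 1}

/-- A tree-decomposition is connected if every bag is a connected vertex set. -/
def TreeDecomp.IsConn {V ι : Type u} {G : SimpleGraph V} {T : SimpleGraph ι}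
    (td : TreeDecomp G T) : Prop :=
  ∀ t, IsConnSet G (td.bag t)

/-- The connected tree-width of `G`. -/
noncomputable def ctw {V : Type u} (G : SimpleGraph V) : ℕ :=
  sInf {k | ∃ (ι : Type u) (T : SimpleGraph ι) (td : TreeDecomp G T),
    td.IsConn ∧ ∀ t, (td.bag t).ncard ≤ k + 1}

/-- The weak connected tree-width of `G`: the least `k` such that `G` has a
tree-decomposition each of whose bags is contained in a connected set of at
most `k + 1` vertices. -/
noncomputable def wctw {V : Type u} (G : SimpleGraph V) : ℕ :=
  sInf {k | ∃ (ι : Type u) (T : SimpleGraph ι) (td : TreeDecomp G T),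
    ∀ t, ∃ X, td.bag t ⊆ X ∧ IsConnSet G X ∧ X.ncard ≤ k + 1}

/-- The characteristic vector over GF(2) of the edge set of a walk. -/
noncomputable def walkChar {V : Type u} {G : SimpleGraph V} {x y : V}
    (p : G.Walk x y) : Sym2 V → ZMod 2 :=
  fun e => by classical exact if e ∈ p.edges then 1 else 0

/-- The characteristic vectors of the cycles of `G` of length at most `ℓ`. -/
def cycleChars {V : Type u} (G : SimpleGraph V) (ℓ : ℕ) : Set (Sym2 V → ZMod 2) :=
  {f | ∃ (v : V) (p : G.Walk v v), p.IsCycle ∧ p.length ≤ ℓ ∧ f = walkChar p}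

/-- The cycles of length at most `ℓ` generate the cycle space of `G` over GF(2). -/
def GeneratesLE {V : Type u} (G : SimpleGraph V) (ℓ : ℕ) : Prop :=
  ∀ ⦃v : V⦄ (p : G.Walk v v), p.IsCycle →
    walkChar p ∈ Submodule.span (ZMod 2) (cycleChars G ℓ)

/-- `ℓ(G)`: the least `ℓ` such that the cycles of length at most `ℓ`
generate the cycle space of `G`. -/
noncomputable def ellGraph {V : Type u} (G : SimpleGraph V) : ℕ :=
  sInf {ℓ | GeneratesLE G ℓ}

/-- `Γ` is a set of cycles of `G` generating its cycle space over GF(2). -/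
def GeneratesSet {V : Type u} (G : SimpleGraph V) (Γ : Set (Σ v : V, G.Walk v v)) : Prop :=
  (∀ c ∈ Γ, c.2.IsCycle) ∧
  ∀ ⦃v : V⦄ (p : G.Walk v v), p.IsCycle →
    walkChar p ∈ Submodule.span (ZMod 2) {f | ∃ c ∈ Γ, f = walkChar c.2}

/-- A bramble: a collection of connected vertex sets, any two of which have
connected union. -/
def IsBramble {V : Type u} (G : SimpleGraph V) (B : Set (Set V)) : Prop :=
  (∀ S ∈ B, IsConnSet G S) ∧ ∀ S ∈ B, ∀ S' ∈ B, IsConnSet G (S ∪ S')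

/-- `X` is a connected cover of the bramble `B`. -/
def IsConnCover {V : Type u} (G : SimpleGraph V) (B : Set (Set V)) (X : Set V) : Prop :=
  IsConnSet G X ∧ ∀ S ∈ B, (X ∩ S).Nonempty

/-- The connected order of a bramble: the least size of a connected cover. -/
noncomputable def connOrder {V : Type u} (G : SimpleGraph V) (B : Set (Set V)) : ℕ :=
  sInf {n | ∃ X, IsConnCover G B X ∧ X.ncard = n}

/-- The maximum connected order of a bramble of `G`. -/
noncomputable def cbn {V : Type u} (G : SimpleGraph V) : ℕ :=
  sSup {n | ∃ B, IsBramble G B ∧ connOrder G B = n}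

/-- A geodesic cycle: a cycle containing a shortest `G`-path between any two
of its vertices. -/
def IsGeodesicCycle {V : Type u} (G : SimpleGraph V) {v : V} (p : G.Walk v v) : Prop :=
  p.IsCycle ∧ ∀ x ∈ p.support, ∀ y ∈ p.support,
    ∃ q : G.Walk x y, q.length = G.dist x y ∧ ∀ e ∈ q.edges, e ∈ p.edges

/-- The graph obtained from `K_n` by subdividing every edge exactly `k` times:
the edge between `i < j` is replaced by the path
`i, ((i,j),0), ((i,j),1), …, ((i,j),k-1), j`. -/
def subK (n k : ℕ) : SimpleGraph (Fin n ⊕ ({p : Fin n × Fin n // p.1 < p.2} × Fin k)) :=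
  SimpleGraph.fromRel fun u v =>
    match u, v with
    | Sum.inl i, Sum.inl j => i < j ∧ k = 0
    | Sum.inl i, Sum.inr (e, c) =>
        (e.val.1 = i ∧ (c : ℕ) = 0) ∨ (e.val.2 = i ∧ (c : ℕ) = k - 1)
    | Sum.inr (e, c), Sum.inr (e', c') => e = e' ∧ (c' : ℕ) = (c : ℕ) + 1
    | _, _ => False


section AuxAdmissible

/- ---- stage 1 ---- -/
open Classical in
noncomputable def parityChar {V : Type u} {G : SimpleGraph V} {x y : V}
    (p : G.Walk x y) : Sym2 V → ZMod 2 :=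
  fun e => (p.edges.count e : ZMod 2)

lemma parityChar_append {V : Type u} {G : SimpleGraph V} {x y z : V}
    (p : G.Walk x y) (q : G.Walk y z) :
    parityChar (p.append q) = parityChar p + parityChar q := by
  classical
  funext e
  simp [parityChar, SimpleGraph.Walk.edges_append, List.count_append]

lemma parityChar_reverse {V : Type u} {G : SimpleGraph V} {x y : V}
    (p : G.Walk x y) : parityChar p.reverse = parityChar p := by
  classical
  funext e
  simp [parityChar, SimpleGraph.Walk.edges_reverse]

lemma parityChar_eq_walkChar {V : Type u} {G : SimpleGraph V} {x y : V}
    {p : G.Walk x y} (hp : p.IsTrail) : parityChar p = walkChar p := by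
  classical
  funext e
  simp only [parityChar, walkChar]
  by_cases h : e ∈ p.edges
  · simp [h, List.count_eq_one_of_mem hp.edges_nodup h]
  · simp [h, List.count_eq_zero_of_not_mem h]

lemma parityChar_nil {V : Type u} {G : SimpleGraph V} {x : V} :
    parityChar (SimpleGraph.Walk.nil : G.Walk x x) = 0 := by
  classical
  funext e; simp [parityChar]

/-- parity char of closed walks lies in the span of short cycle chars. -/
lemma parityChar_mem_span {V : Type u} {G : SimpleGraph V} {ℓ : ℕ}
    (hG : GeneratesLE G ℓ) :
    ∀ (n : ℕ) {v : V} (c : G.Walk v v), c.length ≤ n →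
      parityChar c ∈ Submodule.span (ZMod 2) (cycleChars G ℓ) := by
  classical
  intro n
  induction n using Nat.strong_induction_on with
  | _ n IH =>
    intro v c hlen
    by_cases hcyc : c.IsCycle
    · rw [parityChar_eq_walkChar hcyc.isTrail]
      exact hG c hcyc
    by_cases hdup : c.support.tail.Nodup
    · -- no repeated inner vertex: c is nil, a backtrack of length 2, or a cycle
      cases c with
      | nil => rw [parityChar_nil]; exact Submodule.zero_mem _
      | cons h rest =>
        rename_i v₂
        rw [SimpleGraph.Walk.cons_isCycle_iff] at hcyc
        push_neg at hcyc
        have hrestpath : rest.IsPath := by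
          rw [SimpleGraph.Walk.isPath_def]
          simpa using hdup
        have hedge := hcyc hrestpath
        -- s(v, v₂) ∈ rest.edges: derive rest has length 1 (backtrack)
        cases rest with
        | nil => exact absurd h.symm (by simp [SimpleGraph.Walk.edges] at hedge)
        | cons h₂ rest₂ =>
          rename_i v₃
          have hrest₂path : rest₂.IsPath := hrestpath.of_cons
          simp only [SimpleGraph.Walk.edges_cons, List.mem_cons] at hedge
          have hvne : v ≠ v₂ := h.ne
          rcases hedge with heq | hmem
          · -- v = v₃, so rest₂ : Walk v v path → nil → backtrack of length 2
            have hv3 : v = v₃ := by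
              rw [Sym2.eq_iff] at heq
              rcases heq with ⟨h1, h2⟩ | ⟨h1, h2⟩
              · exact absurd h1 hvne
              · exact h1
            subst hv3
            have hnil : rest₂ = SimpleGraph.Walk.nil :=
              (SimpleGraph.Walk.isPath_iff_eq_nil (p := rest₂)).1 hrest₂path
            subst hnil
            -- c = cons h (cons h₂ nil), a backtrack: parityChar = 0
            have : parityChar (SimpleGraph.Walk.cons h (SimpleGraph.Walk.cons h₂ SimpleGraph.Walk.nil)) = 0 := by
              funext e
              simp only [parityChar, SimpleGraph.Walk.edges_cons, SimpleGraph.Walk.edges_nil]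
              have hsw : s(v₂, v) = s(v, v₂) := Sym2.eq_swap
              rw [hsw]
              by_cases he : e = s(v, v₂)
              · subst he; norm_num [List.count_cons]
                rfl
              · rw [List.count_eq_zero_of_not_mem (by simp [he])]
                simp
            rw [this]; exact Submodule.zero_mem _
          · -- s(v,v₂) ∈ rest₂.edges → v₂ ∈ rest₂.support, contradicting path
            have hv2mem : v₂ ∈ rest₂.support :=
              SimpleGraph.Walk.snd_mem_support_of_mem_edges rest₂ hmem
            have hnd := hrestpath.support_nodup
            simp only [SimpleGraph.Walk.support_cons, List.nodup_cons] at hnd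
            exact absurd hv2mem hnd.1
    · -- repeated inner vertex: rotate and split
      obtain ⟨u, hu⟩ := List.exists_duplicate_iff_not_nodup.2 hdup
      have hucount : 2 ≤ c.support.tail.count u := List.duplicate_iff_two_le_count.1 hu
      have humem : u ∈ c.support := List.mem_of_mem_tail hu.mem
      set c' := c.rotate u humem with hc'
      have hperm : c'.edges.Perm c.edges := (SimpleGraph.Walk.rotate_edges c u humem).perm
      have hpc : parityChar c' = parityChar c := by
        funext e; simp only [parityChar]; rw [hperm.count_eq]
      have hlen' : c'.length = c.length := by
        rw [← SimpleGraph.Walk.length_edges, ← SimpleGraph.Walk.length_edges, hperm.length_eq]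
      have hcount' : 2 ≤ c'.support.tail.count u := by
        rw [((SimpleGraph.Walk.support_rotate c u humem).perm).count_eq]
        exact hucount
      cases hc'' : c' with
      | nil => rw [hc''] at hcount'; simp at hcount'
      | cons hadj rest =>
        rename_i u₂
        rw [hc''] at hcount' hpc hlen'
        simp only [SimpleGraph.Walk.support_cons, List.tail_cons] at hcount'
        have humem₂ : u ∈ rest.support := List.count_pos_iff.1 (by omega)
        set r₁ := rest.takeUntil u humem₂ with hr₁
        set r₂ := rest.dropUntil u humem₂ with hr₂
        have hspec : r₁.append r₂ = rest := SimpleGraph.Walk.take_spec rest humem₂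
        have hc1 : 1 = List.count u r₁.support := (SimpleGraph.Walk.count_support_takeUntil_eq_one rest humem₂).symm
        have hsup : rest.support = r₁.support ++ r₂.support.tail := by
          rw [← hspec, SimpleGraph.Walk.support_append]
        have hr₂count : 1 ≤ List.count u r₂.support.tail := by
          have := hcount'
          rw [hsup, List.count_append, ← hc1] at this
          omega
        have hr₂nonnil : r₂.length ≠ 0 := by
          intro h0
          have : r₂ = SimpleGraph.Walk.nil := SimpleGraph.Walk.nil_iff_eq_nil.1 (SimpleGraph.Walk.length_eq_zero_iff.1 h0)
          rw [this] at hr₂count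
          simp at hr₂count
        have hlensum : 1 + r₁.length + r₂.length = c.length := by
          have : rest.length = r₁.length + r₂.length := by
            rw [← hspec, SimpleGraph.Walk.length_append]
          simp only [SimpleGraph.Walk.length_cons] at hlen'
          omega
        have hsplit : parityChar c = parityChar (SimpleGraph.Walk.cons hadj r₁) + parityChar r₂ := by
          rw [← hpc]
          have : (SimpleGraph.Walk.cons hadj rest) = (SimpleGraph.Walk.cons hadj r₁).append r₂ := by
            rw [SimpleGraph.Walk.cons_append, hspec]
          rw [this, parityChar_append]
        rw [hsplit]
        have h1 : (SimpleGraph.Walk.cons hadj r₁).length ≤ n - 1 := by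
          simp only [SimpleGraph.Walk.length_cons]
          omega
        have h2 : r₂.length ≤ n - 1 := by omega
        have hn1 : n - 1 < n := by omega
        exact Submodule.add_mem _ (IH (n-1) hn1 _ h1) (IH (n-1) hn1 _ h2)

section Excursion

variable {V : Type u} {G : SimpleGraph V}

lemma connIn_refl {S : Set V} {v : V} (hv : v ∈ S) : ConnIn G S v v :=
  ⟨SimpleGraph.Walk.nil, by simp [hv]⟩

lemma connIn_symm {S : Set V} {u v : V} (h : ConnIn G S u v) : ConnIn G S v u := by
  obtain ⟨p, hp⟩ := h
  exact ⟨p.reverse, by simpa using hp⟩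

lemma connIn_trans {S : Set V} {u v w : V} (h : ConnIn G S u v) (h' : ConnIn G S v w) :
    ConnIn G S u w := by
  obtain ⟨p, hp⟩ := h
  obtain ⟨q, hq⟩ := h'
  refine ⟨p.append q, ?_⟩
  intro z hz
  rw [SimpleGraph.Walk.support_append] at hz
  rcases List.mem_append.1 hz with h1 | h1
  · exact hp _ h1
  · exact hq _ (List.mem_of_mem_tail h1)

lemma connIn_adj {S : Set V} {u v : V} (hu : u ∈ S) (hv : v ∈ S) (h : G.Adj u v) :
    ConnIn G S u v :=
  ⟨SimpleGraph.Walk.cons h SimpleGraph.Walk.nil, by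
    intro z hz; simp at hz; rcases hz with rfl | rfl <;> assumption⟩

open Classical in
noncomputable def chi (G : SimpleGraph V) (S : Set V) (x : V) (v : V) : ZMod 2 :=
  if v ∈ S ∧ ConnIn G S x v then 1 else 0

lemma chi_mem_S {S : Set V} {x v : V} (h : chi G S x v ≠ 0) : v ∈ S := by
  classical
  by_contra hv
  apply h
  rw [chi, if_neg (by tauto)]

lemma chi_eq_of_connIn {S : Set V} {x c d : V} (hc : c ∈ S) (hd : d ∈ S)
    (h : ConnIn G S c d) : chi G S x c = chi G S x d := by
  classical
  unfold chi
  by_cases h1 : ConnIn G S x c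
  · rw [if_pos ⟨hc, h1⟩, if_pos ⟨hd, connIn_trans h1 h⟩]
  · rw [if_neg (by tauto), if_neg ?_]
    rintro ⟨-, h2⟩
    exact h1 (connIn_trans h2 (connIn_symm h))

open Classical in
noncomputable def wgt (G : SimpleGraph V) (S U : Set V) (x : V) : Sym2 V → ZMod 2 :=
  Sym2.lift ⟨fun u v => if u ∈ U ∧ v ∈ U then 0 else chi G S x u + chi G S x v, by
    intro a b
    dsimp only
    by_cases h : a ∈ U ∧ b ∈ U
    · rw [if_pos h, if_pos ⟨h.2, h.1⟩]
    · rw [if_neg h, if_neg (by tauto), add_comm]⟩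

open Classical in
lemma wgt_mk {S U : Set V} {x u v : V} :
    wgt G S U x s(u, v) =
      if u ∈ U ∧ v ∈ U then 0 else chi G S x u + chi G S x v := by
  rw [wgt, Sym2.lift_mk]

lemma wgt_of_both {S U : Set V} {x u v : V} (hu : u ∈ U) (hv : v ∈ U) :
    wgt G S U x s(u, v) = 0 := by
  classical
  rw [wgt_mk, if_pos ⟨hu, hv⟩]

lemma wgt_of_not {S U : Set V} {x u v : V} (h : u ∉ U ∨ v ∉ U) :
    wgt G S U x s(u, v) = chi G S x u + chi G S x v := by
  classical
  rw [wgt_mk, if_neg (by tauto)]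

noncomputable def Wsum (S U : Set V) (x : V) {a b : V} (q : G.Walk a b) : ZMod 2 :=
  (q.edges.map (wgt G S U x)).sum

lemma Wsum_nil {S U : Set V} {x a : V} :
    Wsum S U x (SimpleGraph.Walk.nil : G.Walk a a) = 0 := by simp [Wsum]

lemma Wsum_cons {S U : Set V} {x a b c : V} (h : G.Adj a b) (q : G.Walk b c) :
    Wsum S U x (SimpleGraph.Walk.cons h q) = wgt G S U x s(a, b) + Wsum S U x q := by
  simp [Wsum]

lemma Wsum_append {S U : Set V} {x a b c : V} (q : G.Walk a b) (q' : G.Walk b c) :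
    Wsum S U x (q.append q') = Wsum S U x q + Wsum S U x q' := by
  simp [Wsum, SimpleGraph.Walk.edges_append]

lemma zmod2_add_self (z : ZMod 2) : z + z = 0 := by
  fin_cases z <;> decide

/-- telescoping when every edge has an endpoint outside `U`. -/
lemma Wsum_tel {S U : Set V} {x : V} :
    ∀ {a b : V} (q : G.Walk a b),
      (∀ u v, s(u, v) ∈ q.edges → u ∉ U ∨ v ∉ U) →
      Wsum S U x q = chi G S x a + chi G S x b := by
  intro a b q
  induction q with
  | nil => intro _; rw [Wsum_nil, zmod2_add_self]
  | @cons a a₂ b h q ih =>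
    intro hq
    rw [Wsum_cons, wgt_of_not (hq a a₂ (by simp)), ih (fun u v hm => hq u v (by simp [hm])),
      add_assoc, ← add_assoc (chi G S x a₂), zmod2_add_self, zero_add]

/-- a "bad" walk contains an excursion between distinct components of `G[S]`. -/
def Bad (G : SimpleGraph V) (S U : Set V) {a b : V} (q : G.Walk a b) : Prop :=
  ∃ (c d : V) (q₁ : G.Walk a c) (q' : G.Walk c d) (q₂ : G.Walk d b),
    q = q₁.append (q'.append q₂) ∧ c ∈ S ∧ d ∈ S ∧ ¬ ConnIn G S c d ∧
      (∀ v ∈ q'.support, v ∈ S ∪ Uᶜ)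

lemma Bad.cons_lift {S U : Set V} {a a₂ b : V} (h : G.Adj a a₂) {q : G.Walk a₂ b}
    (hb : Bad G S U q) : Bad G S U (SimpleGraph.Walk.cons h q) := by
  obtain ⟨c, d, q₁, q', q₂, rfl, hc, hd, hcd, hsupp⟩ := hb
  exact ⟨c, d, SimpleGraph.Walk.cons h q₁, q', q₂, by rw [SimpleGraph.Walk.cons_append],
    hc, hd, hcd, hsupp⟩

lemma Bad.append_lift {S U : Set V} {a b c : V} (q₀ : G.Walk a b) {q : G.Walk b c}
    (hb : Bad G S U q) : Bad G S U (q₀.append q) := by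
  obtain ⟨c', d, q₁, q', q₂, rfl, hc, hd, hcd, hsupp⟩ := hb
  exact ⟨c', d, q₀.append q₁, q', q₂, by rw [SimpleGraph.Walk.append_assoc], hc, hd, hcd, hsupp⟩

/-- peel off the initial excursion: first return to `U`. -/
lemma peel {S U : Set V} (hbd : ∀ u v, G.Adj u v → u ∈ U → v ∉ U → u ∈ S) :
    ∀ {a b : V} (q : G.Walk a b), a ∉ U → b ∈ U →
      ∃ (d : V) (r₁ : G.Walk a d) (r₂ : G.Walk d b),
        q = r₁.append r₂ ∧ d ∈ S ∧ d ∈ U ∧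
          (∀ v ∈ r₁.support, v ≠ d → v ∉ U) ∧ 1 ≤ r₁.length := by
  intro a b q
  induction q with
  | nil => intro ha hb; exact absurd hb ha
  | @cons a a₂ b h q ih =>
    intro ha hb
    by_cases ha₂ : a₂ ∈ U
    · refine ⟨a₂, SimpleGraph.Walk.cons h SimpleGraph.Walk.nil, q, by
        rw [SimpleGraph.Walk.cons_append, SimpleGraph.Walk.nil_append],
        hbd a₂ a h.symm ha₂ ha, ha₂, ?_, by simp⟩
      intro v hv hvd
      simp only [SimpleGraph.Walk.support_cons, SimpleGraph.Walk.support_nil,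
        List.mem_cons, List.mem_singleton] at hv
      rcases hv with rfl | hv
      · exact ha
      · simp at hv; exact absurd hv hvd
    · obtain ⟨d, r₁, r₂, rfl, hdS, hdU, hr₁, hlen⟩ := ih ha₂ hb
      refine ⟨d, SimpleGraph.Walk.cons h r₁, r₂, by rw [SimpleGraph.Walk.cons_append],
        hdS, hdU, ?_, by simp⟩
      intro v hv hvd
      simp only [SimpleGraph.Walk.support_cons, List.mem_cons] at hv
      rcases hv with rfl | hv
      · exact ha
      · exact hr₁ v hv hvd

end Excursion

section Excursion2
variable {V : Type u} {G : SimpleGraph V} {S U : Set V} {x : V}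

/-- main dichotomy: a walk between `U`-vertices has `Wsum = 0` or contains a bad excursion. -/
lemma Wsum_dichotomy (hbd : ∀ u v, G.Adj u v → u ∈ U → v ∉ U → u ∈ S) :
    ∀ (n : ℕ) {a b : V} (q : G.Walk a b), q.length ≤ n → a ∈ U → b ∈ U →
      Wsum S U x q = 0 ∨ Bad G S U q := by
  intro n
  induction n using Nat.strong_induction_on with
  | _ n IH =>
    intro a b q hlen ha hb
    cases q with
    | nil => left; exact Wsum_nil
    | cons h q₂ =>
      rename_i a₂
      have hn : 1 ≤ n := le_trans (by simp) hlen
      by_cases ha₂ : a₂ ∈ U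
      · have := IH (n-1) (by omega) q₂ (by simp at hlen; omega) ha₂ hb
        rcases this with h0 | hbad
        · left; rw [Wsum_cons, wgt_of_both ha ha₂, zero_add, h0]
        · right; exact hbad.cons_lift h
      · -- excursion starts
        have haS : a ∈ S := hbd a a₂ h ha ha₂
        obtain ⟨d, r₁, r₂, rfl, hdS, hdU, hr₁, hr₁len⟩ := peel hbd q₂ ha₂ hb
        have hr₁edges : ∀ u v, s(u, v) ∈ (SimpleGraph.Walk.cons h r₁).edges → u ∉ U ∨ v ∉ U := by
          intro u v hm
          simp only [SimpleGraph.Walk.edges_cons, List.mem_cons] at hm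
          rcases hm with heq | hm
          · rw [Sym2.eq_iff] at heq
            rcases heq with ⟨rfl, rfl⟩ | ⟨rfl, rfl⟩
            · right; exact ha₂
            · left; exact ha₂
          · have hne : u ≠ v := (SimpleGraph.Walk.adj_of_mem_edges r₁ hm).ne
            by_contra hcon
            push_neg at hcon
            have hu : u = d := by
              by_contra hu
              exact (hr₁ u (SimpleGraph.Walk.fst_mem_support_of_mem_edges r₁ hm) hu) hcon.1
            have hv : v = d := by
              by_contra hv
              exact (hr₁ v (SimpleGraph.Walk.snd_mem_support_of_mem_edges r₁ hm) hv) hcon.2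
            exact hne (hu.trans hv.symm)
        have htel : Wsum S U x (SimpleGraph.Walk.cons h r₁) = chi G S x a + chi G S x d :=
          Wsum_tel _ hr₁edges
        have hsplit : Wsum S U x (SimpleGraph.Walk.cons h (r₁.append r₂)) =
            Wsum S U x (SimpleGraph.Walk.cons h r₁) + Wsum S U x r₂ := by
          rw [← SimpleGraph.Walk.cons_append, Wsum_append]
        by_cases hχ : chi G S x a = chi G S x d
        · have h0 : Wsum S U x (SimpleGraph.Walk.cons h r₁) = 0 := by
            rw [htel, hχ, zmod2_add_self]
          have hlen₂ : r₂.length ≤ n - 1 := by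
            have : (SimpleGraph.Walk.cons h (r₁.append r₂)).length =
                1 + r₁.length + r₂.length := by
              simp [SimpleGraph.Walk.length_append]; omega
            omega
          rcases IH (n-1) (by omega) r₂ hlen₂ hdU hb with h0' | hbad
          · left; rw [hsplit, h0, h0', add_zero]
          · right
            have : SimpleGraph.Walk.cons h (r₁.append r₂) =
                (SimpleGraph.Walk.cons h r₁).append r₂ := by
              rw [SimpleGraph.Walk.cons_append]
            rw [this]
            exact hbad.append_lift _
        · right
          refine ⟨a, d, SimpleGraph.Walk.nil, SimpleGraph.Walk.cons h r₁, r₂, ?_, haS, hdS, ?_, ?_⟩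
          · rw [SimpleGraph.Walk.nil_append, SimpleGraph.Walk.cons_append]
          · intro hconn
            exact hχ (chi_eq_of_connIn haS hdS hconn)
          · intro v hv
            simp only [SimpleGraph.Walk.support_cons, List.mem_cons] at hv
            rcases hv with rfl | hv
            · exact Or.inl haS
            · by_cases hvd : v = d
              · subst hvd; exact Or.inl hdS
              · exact Or.inr (hr₁ v hv hvd)

variable {p : ℕ}

lemma adj_of_length_one {a b : V} (q : G.Walk a b) (h : q.length = 1) : G.Adj a b := by
  cases q with
  | nil => simp at h
  | cons hadj rest =>
    have : rest.length = 0 := by simp only [SimpleGraph.Walk.length_cons] at h; omega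
    have hz := SimpleGraph.Walk.eq_of_length_eq_zero this
    subst hz
    exact hadj

/-- every closed walk of length at most `p+1` has `Wsum = 0`. -/
lemma Wsum_closed_eq_zero
    (hbd : ∀ u v, G.Adj u v → u ∈ U → v ∉ U → u ∈ S)
    (hmin : ∀ (c d : V) (q : G.Walk c d), q.IsPath → (∀ v ∈ q.support, v ∈ S ∪ Uᶜ) →
      c ∈ S → d ∈ S → ¬ ConnIn G S c d → p ≤ q.length)
    {v : V} (D : G.Walk v v) (hD : D.length ≤ p + 1) :
    Wsum S U x D = 0 := by
  classical
  by_cases hU : ∀ u w, s(u, w) ∈ D.edges → u ∉ U ∨ w ∉ U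
  · rw [Wsum_tel _ hU, zmod2_add_self]
  · push_neg at hU
    obtain ⟨u, w, hm, huU, hwU⟩ := hU
    have humem : u ∈ D.support := SimpleGraph.Walk.fst_mem_support_of_mem_edges D hm
    set D₂ := D.rotate u humem with hD₂
    have hperm : D₂.edges.Perm D.edges := (SimpleGraph.Walk.rotate_edges D u humem).perm
    have hWeq : Wsum S U x D₂ = Wsum S U x D := by
      unfold Wsum
      exact List.Perm.sum_eq (hperm.map _)
    have hlen₂ : D₂.length ≤ p + 1 := by
      rw [← SimpleGraph.Walk.length_edges, hperm.length_eq, SimpleGraph.Walk.length_edges]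
      exact hD
    rcases Wsum_dichotomy hbd (p+1) D₂ hlen₂ huU huU with h0 | hbad
    · rw [← hWeq, h0]
    · exfalso
      obtain ⟨c, d, q₁, q', q₂, heq, hcS, hdS, hcd, hsupp⟩ := hbad
      have hq'' := hmin c d q'.bypass q'.bypass_isPath
        (fun z hz => hsupp z (q'.support_bypass_subset hz)) hcS hdS hcd
      have hq'len : p ≤ q'.length := le_trans hq'' q'.length_bypass_le
      have hlensum : q₁.length + q'.length + q₂.length ≤ p + 1 := by
        have : D₂.length = q₁.length + (q'.length + q₂.length) := by
          rw [heq]; simp [SimpleGraph.Walk.length_append]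
        omega
      -- the complementary walk from d to c has length ≤ 1
      have hcomp : (q₂.append q₁).length ≤ 1 := by
        rw [SimpleGraph.Walk.length_append]; omega
      rcases Nat.le_one_iff_eq_zero_or_eq_one.1 hcomp with h0 | h1
      · have : d = c := SimpleGraph.Walk.eq_of_length_eq_zero h0
        subst this
        exact hcd (connIn_refl hcS)
      · exact hcd (connIn_symm (connIn_adj hdS hcS (adj_of_length_one _ h1)))

end Excursion2

section Helpers
variable {V : Type u} {G : SimpleGraph V} {S U : Set V} {x : V}

lemma chi_eq_one {v : V} (h1 : v ∈ S) (h2 : ConnIn G S x v) : chi G S x v = 1 := by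
  classical
  unfold chi
  rw [if_pos ⟨h1, h2⟩]

lemma chi_eq_zero {v : V} (h : ¬ (v ∈ S ∧ ConnIn G S x v)) : chi G S x v = 0 := by
  classical
  unfold chi
  rw [if_neg h]

lemma Wsum_zero_of_support_subset {a b : V} (q : G.Walk a b)
    (h : ∀ v ∈ q.support, v ∈ U) : Wsum S U x q = 0 := by
  induction q with
  | nil => exact Wsum_nil
  | @cons a a₂ b hadj q ih =>
    rw [Wsum_cons, wgt_of_both (h a (by simp)) (h a₂ (by simp)),
      ih (fun v hv => h v (by simp [hv])), add_zero]

lemma chain (hbd : ∀ u v, G.Adj u v → u ∈ U → v ∉ U → u ∈ S) :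
    ∀ {a b : V} (q : G.Walk a b), q.IsPath → a ∉ U →
      (∀ v ∈ q.support, v ≠ b → v ∉ S) →
      ∀ v ∈ q.support, v ≠ b → v ∉ U := by
  intro a b q
  induction q with
  | nil =>
    intro _ ha _ v hv hvb
    simp at hv; subst hv; exact absurd rfl hvb
  | @cons a a₂ b hadj q ih =>
    intro hpath ha hmid v hv hvb
    simp only [SimpleGraph.Walk.support_cons, List.mem_cons] at hv
    rcases hv with rfl | hv
    · exact ha
    · by_cases ha₂b : a₂ = b
      · subst ha₂b
        have : q = SimpleGraph.Walk.nil := (SimpleGraph.Walk.isPath_iff_eq_nil (p := q)).1 hpath.of_cons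
        subst this
        simp at hv
        exact absurd hv hvb
      · have ha₂ : a₂ ∉ U := by
          intro ha₂U
          exact hmid a₂ (by simp) ha₂b (hbd a₂ a hadj.symm ha₂U ha)
        exact ih hpath.of_cons ha₂ (fun z hz hzb => hmid z (by simp [hz]) hzb) v hv hvb

lemma edge_endpoint_mid :
    ∀ {a b : V} (q : G.Walk a b), q.IsPath → ∀ u v, s(u, v) ∈ q.edges →
      (u ≠ a ∧ u ≠ b) ∨ (v ≠ a ∧ v ≠ b) ∨ q.length ≤ 1 := by
  intro a b q
  induction q with
  | nil => intro _ u v hm; simp at hm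
  | @cons a a₂ b hadj q ih =>
    intro hpath u v hm
    simp only [SimpleGraph.Walk.edges_cons, List.mem_cons] at hm
    have hanotin : a ∉ q.support := by
      have := hpath.support_nodup
      simp only [SimpleGraph.Walk.support_cons, List.nodup_cons] at this
      exact this.1
    rcases hm with heq | hm
    · by_cases ha₂b : a₂ = b
      · subst ha₂b
        have : q = SimpleGraph.Walk.nil := (SimpleGraph.Walk.isPath_iff_eq_nil (p := q)).1 hpath.of_cons
        subst this
        right; right; simp
      · rw [Sym2.eq_iff] at heq
        rcases heq with ⟨rfl, rfl⟩ | ⟨rfl, rfl⟩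
        · exact Or.inr (Or.inl ⟨hadj.ne', ha₂b⟩)
        · exact Or.inl ⟨hadj.ne', ha₂b⟩
    · have hune : u ≠ a := by
        intro h; subst h
        exact hanotin (SimpleGraph.Walk.fst_mem_support_of_mem_edges q hm)
      have hvne : v ≠ a := by
        intro h; subst h
        exact hanotin (SimpleGraph.Walk.snd_mem_support_of_mem_edges q hm)
      rcases ih hpath.of_cons u v hm with ⟨h1, h2⟩ | ⟨h1, h2⟩ | hlen
      · exact Or.inl ⟨hune, h2⟩
      · exact Or.inr (Or.inl ⟨hvne, h2⟩)
      · -- q.length ≤ 1 and q has an edge: q is a single edge a₂-b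
        cases q with
        | nil => simp at hm
        | cons hadj₂ q₂ =>
          rename_i z
          have hq₂ : q₂.length = 0 := by simp only [SimpleGraph.Walk.length_cons] at hlen; omega
          have hzb : z = b := SimpleGraph.Walk.eq_of_length_eq_zero hq₂
          subst hzb
          have hq₂e : q₂.edges = [] := List.length_eq_zero_iff.1 (by
            rw [SimpleGraph.Walk.length_edges]; exact hq₂)
          simp only [SimpleGraph.Walk.edges_cons, hq₂e, List.mem_cons, List.not_mem_nil,
            or_false] at hm
          have ha₂b := hadj₂.ne
          have ha₂a : a₂ ≠ a := fun h => hanotin (h ▸ SimpleGraph.Walk.start_mem_support _)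
          rw [Sym2.eq_iff] at hm
          rcases hm with ⟨h1, h2⟩ | ⟨h1, h2⟩
          · exact Or.inl ⟨h1 ▸ ha₂a, h1 ▸ ha₂b⟩
          · exact Or.inr (Or.inl ⟨h2 ▸ ha₂a, h2 ▸ ha₂b⟩)

open Classical in
lemma sum_walkChar_mul [Fintype V] {a b : V} (q : G.Walk a b) (hq : q.IsTrail)
    (wf : Sym2 V → ZMod 2) :
    ∑ e : Sym2 V, walkChar q e * wf e
      = (q.edges.map wf).sum := by
  have hwc : ∀ e, walkChar q e = if e ∈ q.edges then (1 : ZMod 2) else 0 := fun _ => rfl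
  simp only [hwc]
  rw [← List.sum_toFinset _ hq.edges_nodup]
  rw [← Finset.sum_filter_add_sum_filter_not Finset.univ (fun e => e ∈ q.edges)]
  have h2 : ∑ e ∈ Finset.univ.filter (fun e => ¬ e ∈ q.edges),
      (if e ∈ q.edges then (1 : ZMod 2) else 0) * wf e = 0 := by
    apply Finset.sum_eq_zero
    intro e he
    simp only [Finset.mem_filter] at he
    rw [if_neg he.2, zero_mul]
  rw [h2, add_zero]
  apply Finset.sum_congr
  · ext e
    simp [List.mem_toFinset]
  · intro e he
    rw [if_pos (List.mem_toFinset.mp he), one_mul]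

end Helpers

section TreeSide
variable {ι : Type u} {T : SimpleGraph ι}

lemma side_mem_self {t s : ι} (hne : t ≠ s) : t ∈ Side T t s :=
  ⟨SimpleGraph.Walk.nil, SimpleGraph.Walk.IsPath.nil, by simp [Ne.symm hne]⟩

lemma side_vertex {t s z z' : ι} (q : T.Walk z t) (hq : q.IsPath) (hs : s ∉ q.support)
    (hz' : z' ∈ q.support) : z' ∈ Side T t s := by
  classical
  exact ⟨q.dropUntil z' hz', hq.dropUntil hz',
    fun hmem => hs (q.support_dropUntil_subset hz' hmem)⟩

lemma side_not_both (htree : T.IsTree) {t s z : ι} (hadj : T.Adj t s)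
    (h1 : z ∈ Side T t s) (h2 : z ∈ Side T s t) : False := by
  obtain ⟨p₁, hp₁, hs₁⟩ := h1
  obtain ⟨p₂, hp₂, ht₂⟩ := h2
  have hq : (p₂.append (SimpleGraph.Walk.cons hadj.symm SimpleGraph.Walk.nil)).IsPath := by
    rw [SimpleGraph.Walk.isPath_def, SimpleGraph.Walk.support_append]
    simp only [SimpleGraph.Walk.support_cons, SimpleGraph.Walk.support_nil, List.tail_cons]
    rw [List.nodup_append]
    exact ⟨hp₂.support_nodup, List.nodup_singleton _,
      by simp [List.disjoint_singleton]; exact fun a ha hat => ht₂ (hat ▸ ha)⟩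
  obtain ⟨pu, -, huniq⟩ := htree.existsUnique_path z t
  have he1 := huniq _ hp₁
  have he2 := huniq _ hq
  rw [← he2] at he1
  have : s ∈ p₁.support := by
    rw [he1, SimpleGraph.Walk.support_append]
    exact List.mem_append_left _ (SimpleGraph.Walk.end_mem_support p₂)
  exact hs₁ this

open Classical in
lemma side_cover (htree : T.IsTree) {t s : ι} (hadj : T.Adj t s) (w : ι) :
    w ∈ Side T t s ∨ w ∈ Side T s t := by
  classical
  obtain ⟨wk⟩ := htree.isConnected w t
  set p := wk.bypass with hp
  have hppath : p.IsPath := wk.bypass_isPath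
  by_cases hs : s ∈ p.support
  · right
    refine ⟨p.takeUntil s hs, hppath.takeUntil hs, ?_⟩
    intro ht
    -- t would appear both in the prefix and (as the end) in the suffix
    have hspec := SimpleGraph.Walk.take_spec p hs
    have hnodup : p.support.Nodup := hppath.support_nodup
    rw [← hspec, SimpleGraph.Walk.support_append] at hnodup
    have hdisj := List.disjoint_of_nodup_append hnodup
    have htail : t ∈ (p.dropUntil s hs).support.tail := by
      have hts : t ≠ s := hadj.ne
      have hmem : t ∈ (p.dropUntil s hs).support := SimpleGraph.Walk.end_mem_support _
      have : (p.dropUntil s hs).support = s :: (p.dropUntil s hs).support.tail := by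
        rw [SimpleGraph.Walk.support_eq_cons]; rfl
      rw [this] at hmem
      rcases List.mem_cons.1 hmem with h | h
      · exact absurd h hadj.ne
      · exact h
    exact hdisj ht htail
  · left
    exact ⟨p, hppath, hs⟩

/-- a path from the `t`-side to the `s`-side passing through `t`. -/
lemma path_through (htree : T.IsTree) {t s w' w : ι} (hadj : T.Adj t s)
    (h1 : w' ∈ Side T t s) (h2 : w ∈ Side T s t) :
    ∃ q : T.Walk w' w, q.IsPath ∧ t ∈ q.support := by
  obtain ⟨p₁, hp₁, hs₁⟩ := h1
  obtain ⟨p₂, hp₂, ht₂⟩ := h2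
  refine ⟨p₁.append (SimpleGraph.Walk.cons hadj p₂.reverse), ?_, ?_⟩
  · rw [SimpleGraph.Walk.isPath_def, SimpleGraph.Walk.support_append]
    simp only [SimpleGraph.Walk.support_cons, List.tail_cons]
    rw [List.nodup_append]
    refine ⟨hp₁.support_nodup, by simpa using hp₂.reverse.support_nodup, ?_⟩
    intro z hz z' hz' hzz'
    subst hzz'
    have hzside : z ∈ Side T t s := side_vertex p₁ hp₁ hs₁ hz
    have hzside' : z ∈ Side T s t := by
      rw [SimpleGraph.Walk.support_reverse, List.mem_reverse] at hz'
      exact side_vertex p₂ hp₂ ht₂ hz'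
    exact side_not_both htree hadj hzside hzside'
  · rw [SimpleGraph.Walk.support_append]
    exact List.mem_append_left _ (SimpleGraph.Walk.end_mem_support p₁)

lemma desc_of_sides (htree : T.IsTree) {r t s w : ι} (hadj : T.Adj t s)
    (hr : r ∈ Side T t s) (hw : w ∈ Side T s t) : Desc T r t w := by
  obtain ⟨q, hq, ht⟩ := path_through htree hadj hr hw
  exact ⟨q, hq, ht⟩

open Classical in
lemma desc_self (htree : T.IsTree) (r t : ι) : Desc T r t t := by
  obtain ⟨wk⟩ := htree.isConnected r t
  exact ⟨wk.bypass, wk.bypass_isPath, SimpleGraph.Walk.end_mem_support _⟩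

end TreeSide

end AuxAdmissible

/-- a `t`-admissible path in a rooted stable tree-decomposition
has at most `ℓ(G) − 1` vertices. -/
theorem admissible_path_short {V ι : Type u} [Finite V] (G : SimpleGraph V)
    (T : SimpleGraph ι) (td : TreeDecomp G T) (hst : td.Stable) (r t : ι)
    {x y : V} (P : G.Walk x y) (hP : IsAdmissible G T td.bag r t P) :
    P.length + 1 ≤ ellGraph G - 1 := by
  classical
  cases nonempty_fintype V
  -- ℓ(G) generates
  have hgen : GeneratesLE G (ellGraph G) := by
    have hne : {ℓ | GeneratesLE G ℓ}.Nonempty := by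
      refine ⟨Fintype.card V, ?_⟩
      intro v c hc
      apply Submodule.subset_span
      refine ⟨v, c, hc, ?_, rfl⟩
      have h1 : c.support.tail.length = c.length := by
        have h2 := SimpleGraph.Walk.length_support c
        rw [List.length_tail, h2]
        omega
      rw [← h1]
      exact ((SimpleGraph.Walk.isCycle_def c).1 hc).2.2.length_le_card
    exact Nat.sInf_mem hne
  by_contra hcon
  have hl : ellGraph G ≤ P.length + 1 := by omega
  have hxS := hP.fst_mem
  have hyS := hP.snd_mem
  have hxy : x ≠ y := by rintro rfl; exact hP.not_conn (connIn_refl hxS)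
  have hnadj : ¬ G.Adj x y := fun h => hP.not_conn (connIn_adj hxS hyS h)
  have hp2 : 2 ≤ P.length := by
    by_contra hlt
    push_neg at hlt
    have hcase : P.length = 0 ∨ P.length = 1 := by omega
    rcases hcase with h0 | h1
    · exact hxy (SimpleGraph.Walk.eq_of_length_eq_zero h0)
    · exact hnadj (adj_of_length_one P h1)
  -- interior vertices avoid the bag of t
  have hint : ∀ v ∈ P.support, v ≠ x → v ≠ y → v ∉ td.bag t := by
    intro v hv hvx hvy hvB
    have hspec := SimpleGraph.Walk.take_spec P hv
    have hlen12 := congrArg SimpleGraph.Walk.length hspec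
    rw [SimpleGraph.Walk.length_append] at hlen12
    have h₁pos : 1 ≤ (P.takeUntil v hv).length := by
      rcases Nat.eq_zero_or_pos (P.takeUntil v hv).length with h0 | h
      · exact absurd (SimpleGraph.Walk.eq_of_length_eq_zero h0).symm hvx
      · exact h
    have h₂pos : 1 ≤ (P.dropUntil v hv).length := by
      rcases Nat.eq_zero_or_pos (P.dropUntil v hv).length with h0 | h
      · exact absurd (SimpleGraph.Walk.eq_of_length_eq_zero h0) hvy
      · exact h
    by_cases hconn : ConnIn G (td.bag t) x v
    · have hnc : ¬ ConnIn G (td.bag t) v y := fun h => hP.not_conn (connIn_trans hconn h)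
      have := hP.minimal (P.dropUntil v hv) (hP.isPath.dropUntil hv)
        (fun z hz => hP.support_sub z (SimpleGraph.Walk.support_dropUntil_subset P hv hz))
        hvB hyS hnc
      omega
    · have := hP.minimal (P.takeUntil v hv) (hP.isPath.takeUntil hv)
        (fun z hz => hP.support_sub z (SimpleGraph.Walk.support_takeUntil_subset P hv hz))
        hxS hvB hconn
      omega
  -- second vertex of P
  have hPnotnil : ¬ P.Nil := by
    rw [SimpleGraph.Walk.not_nil_iff_lt_length]; omega
  obtain ⟨v₁, hadj₁, P', hPeq⟩ := SimpleGraph.Walk.not_nil_iff.1 hPnotnil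
  have hP'path : P'.IsPath := by
    have := hP.isPath; rw [hPeq] at this; exact this.of_cons
  have hxnotP' : x ∉ P'.support := by
    have := hP.isPath; rw [hPeq] at this
    have h2 := this.support_nodup
    simp only [SimpleGraph.Walk.support_cons, List.nodup_cons] at h2
    exact h2.1
  have hv₁mem : v₁ ∈ P.support := by rw [hPeq]; simp
  have hv₁x : v₁ ≠ x := hadj₁.ne'
  have hv₁y : v₁ ≠ y := by
    rintro rfl
    have : P' = SimpleGraph.Walk.nil := (SimpleGraph.Walk.isPath_iff_eq_nil (p := P')).1 hP'path
    rw [hPeq, this] at hp2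
    simp at hp2
  have hv₁B : v₁ ∉ td.bag t := hint v₁ hv₁mem hv₁x hv₁y
  have hv₁U' := hP.support_sub v₁ hv₁mem
  rw [unionBags] at hv₁U'
  simp only [Set.mem_iUnion] at hv₁U'
  obtain ⟨u, hu, hv₁u⟩ := hv₁U'
  have hut : t ≠ u := fun h => hv₁B (h ▸ hv₁u)
  obtain ⟨pru, hprupath, htmem⟩ := hu
  -- the child s of t towards u
  have hptupath : (pru.dropUntil t htmem).IsPath := hprupath.dropUntil htmem
  have hptunotnil : ¬ (pru.dropUntil t htmem).Nil := by
    intro hnil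
    rw [SimpleGraph.Walk.nil_iff_length_eq] at hnil
    exact hut (SimpleGraph.Walk.eq_of_length_eq_zero hnil)
  obtain ⟨s, hadjts, p₃, hptueq⟩ := SimpleGraph.Walk.not_nil_iff.1 hptunotnil
  have hp₃path : p₃.IsPath := by
    have := hptupath; rw [hptueq] at this; exact this.of_cons
  have htnotp₃ : t ∉ p₃.support := by
    have := hptupath; rw [hptueq] at this
    have h2 := this.support_nodup
    simp only [SimpleGraph.Walk.support_cons, List.nodup_cons] at h2
    exact h2.1
  have hside_u : u ∈ Side T s t :=
    ⟨p₃.reverse, hp₃path.reverse, by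
      rw [SimpleGraph.Walk.support_reverse, List.mem_reverse]; exact htnotp₃⟩
  have hside_r : r ∈ Side T t s := by
    refine ⟨pru.takeUntil t htmem, hprupath.takeUntil htmem, ?_⟩
    intro hs
    have hspec := SimpleGraph.Walk.take_spec pru htmem
    have hnodup := hprupath.support_nodup
    rw [← hspec, SimpleGraph.Walk.support_append] at hnodup
    have hdisj := List.disjoint_of_nodup_append hnodup
    have : s ∈ (pru.dropUntil t htmem).support.tail := by
      rw [hptueq]
      simp only [SimpleGraph.Walk.support_cons, List.tail_cons]
      exact SimpleGraph.Walk.start_mem_support p₃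
    exact hdisj hs this
  -- the set U
  set U := unionBags td.bag (Side T t s) with hUdef
  have hSU : td.bag t ⊆ U := fun v hv =>
    Set.mem_biUnion (side_mem_self hadjts.ne) hv
  have hbag2 : ∀ z w' w'', w' ∈ Side T t s → w'' ∈ Side T s t →
      z ∈ td.bag w' → z ∈ td.bag w'' → z ∈ td.bag t := by
    intro z w' w'' h1 h2 hz1 hz2
    obtain ⟨q, hq, htq⟩ := path_through td.isTree hadjts h1 h2
    exact td.bag_sep q hq t htq ⟨hz1, hz2⟩
  have hmemU : ∀ z, z ∈ U ↔ ∃ w ∈ Side T t s, z ∈ td.bag w := by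
    intro z
    rw [hUdef, unionBags]
    simp only [Set.mem_iUnion, exists_prop]
  have hbd : ∀ a b, G.Adj a b → a ∈ U → b ∉ U → a ∈ td.bag t := by
    intro a b hab haU hbU
    obtain ⟨w, hwa, hwb⟩ := td.exists_bag_adj hab
    have hw_side : w ∈ Side T s t := by
      rcases side_cover td.isTree hadjts w with hws | hws
      · exact absurd ((hmemU b).2 ⟨w, hws, hwb⟩) hbU
      · exact hws
    obtain ⟨w', hw', haw'⟩ := (hmemU a).1 haU
    exact hbag2 a w' w hw' hw_side haw' hwa
  have hUc : ∀ v, v ∉ U → ∃ w ∈ Side T s t, v ∈ td.bag w := by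
    intro v hv
    obtain ⟨w, hw⟩ := td.exists_bag v
    rcases side_cover td.isTree hadjts w with hws | hws
    · exact absurd ((hmemU v).2 ⟨w, hws, hw⟩) hv
    · exact ⟨w, hws, hw⟩
  have hdesc : ∀ v, v ∈ td.bag t ∪ Uᶜ → v ∈ unionBags td.bag (descSet T r t) := by
    intro v hv
    rcases hv with hv | hv
    · exact Set.mem_biUnion (desc_self td.isTree r t) hv
    · obtain ⟨w, hws, hw⟩ := hUc v hv
      exact Set.mem_biUnion (desc_of_sides td.isTree hadjts hside_r hws) hw
  have hmin : ∀ (c d : V) (q : G.Walk c d), q.IsPath →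
      (∀ v ∈ q.support, v ∈ td.bag t ∪ Uᶜ) → c ∈ td.bag t → d ∈ td.bag t →
      ¬ ConnIn G (td.bag t) c d → P.length ≤ q.length :=
    fun c d q hq hsup hc hd hncd =>
      hP.minimal q hq (fun v hv => hdesc v (hsup v hv)) hc hd hncd
  have hv₁U : v₁ ∉ U := by
    intro h
    obtain ⟨w', hw', hvw'⟩ := (hmemU v₁).1 h
    exact hv₁B (hbag2 v₁ w' u hw' hside_u hvw' hv₁u)
  -- all interior vertices of P avoid U
  have hPout : ∀ v ∈ P.support, v ≠ x → v ≠ y → v ∉ U := by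
    intro v hv hvx hvy
    have hv' : v ∈ P'.support := by
      rw [hPeq] at hv
      simp only [SimpleGraph.Walk.support_cons, List.mem_cons] at hv
      rcases hv with rfl | hv
      · exact absurd rfl hvx
      · exact hv
    refine chain hbd P' hP'path hv₁U ?_ v hv' hvy
    intro z hz hzy
    exact hint z (by rw [hPeq]; simp [hz]) (fun h => hxnotP' (h ▸ hz)) hzy
  have hPedges : ∀ a b, s(a, b) ∈ P.edges → a ∉ U ∨ b ∉ U := by
    intro a b hm
    rcases edge_endpoint_mid P hP.isPath a b hm with ⟨h1, h2⟩ | ⟨h1, h2⟩ | hlen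
    · exact Or.inl (hPout a (SimpleGraph.Walk.fst_mem_support_of_mem_edges P hm) h1 h2)
    · exact Or.inr (hPout b (SimpleGraph.Walk.snd_mem_support_of_mem_edges P hm) h1 h2)
    · omega
  have hWsumP : Wsum (td.bag t) U x P = 1 := by
    rw [Wsum_tel P hPedges, chi_eq_one hxS (connIn_refl hxS),
      chi_eq_zero (fun h => hP.not_conn h.2), add_zero]
  -- the path W inside U
  have hconnU : IsConnSet G U := hst hadjts
  obtain ⟨W₀, hW₀⟩ := hconnU.2 x (hSU hxS) y (hSU hyS)
  have hWpath : W₀.bypass.IsPath := W₀.bypass_isPath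
  have hWsupp : ∀ v ∈ W₀.bypass.support, v ∈ U :=
    fun v hv => hW₀ v (W₀.support_bypass_subset hv)
  have hWsum0 : Wsum (td.bag t) U x W₀.bypass = 0 :=
    Wsum_zero_of_support_subset W₀.bypass hWsupp
  -- span membership of the symmetric difference
  have hchar : parityChar (P.append W₀.bypass.reverse) = walkChar P + walkChar W₀.bypass := by
    rw [parityChar_append, parityChar_reverse,
      parityChar_eq_walkChar hP.isPath.isTrail, parityChar_eq_walkChar hWpath.isTrail]
  have hmem : walkChar P + walkChar W₀.bypass ∈
      Submodule.span (ZMod 2) (cycleChars G (ellGraph G)) := by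
    rw [← hchar]
    exact parityChar_mem_span hgen (P.append W₀.bypass.reverse).length _ le_rfl
  -- the linear functional vanishes on the span
  have hphi : ∀ f ∈ Submodule.span (ZMod 2) (cycleChars G (ellGraph G)),
      ∑ e : Sym2 V, f e * wgt G (td.bag t) U x e = 0 := by
    intro f hf
    induction hf using Submodule.span_induction with
    | mem g hg =>
      obtain ⟨v, D, hcyc, hDlen, rfl⟩ := hg
      rw [sum_walkChar_mul D hcyc.isTrail]
      exact Wsum_closed_eq_zero hbd hmin D (le_trans hDlen hl)
    | zero => simp
    | add g g' hg hg' ihg ihg' =>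
      simp only [Pi.add_apply, add_mul, Finset.sum_add_distrib, ihg, ihg', add_zero]
    | smul c g hg ihg =>
      simp only [Pi.smul_apply, smul_eq_mul, mul_assoc, ← Finset.mul_sum, ihg, mul_zero]
  have h0 := hphi _ hmem
  have hsplit : ∑ e : Sym2 V, (walkChar P + walkChar W₀.bypass) e * wgt G (td.bag t) U x e
      = Wsum (td.bag t) U x P + Wsum (td.bag t) U x W₀.bypass := by
    simp only [Pi.add_apply, add_mul, Finset.sum_add_distrib]
    rw [sum_walkChar_mul P hP.isPath.isTrail, sum_walkChar_mul W₀.bypass hWpath.isTrail]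
    rfl
  rw [hsplit, hWsumP, hWsum0, add_zero] at h0
  exact one_ne_zero h0
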